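/- Let H ∈ (0, 1/2] and let K(t) = t^{H−1/2}·log(1 + 1/t)/Γ(H+1/2), and set λ(n) = (∫_0^{1/n} K(r)² dr)^{-1}. Then for all 0 ≤ s < t ≤ 1, lim_{n→∞} λ(n) ∫_0^{s/n} K((t−s)/n + r)·K(r) dr = 2H·∫_0^s (t−s+r)^{H−1/2}·r^{H−1/2} dr, i.e. the limiting kernel is K̄(t) = √(2H)·t^{H−1/2}. -/

import Mathlib

open Real MeasureTheory Filter

section AuxLemmas
open Set

/-- Uniform bound for the normalized log factor. -/
lemma logfac_bounds (n : ℕ) (hn : 3 ≤ n) {w : ℝ} (h0 : 0 < w) (h1 : w ≤ 1) :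
    0 ≤ Real.log (1 + 1 / (w / (n:ℝ))) / Real.log n ∧
    Real.log (1 + 1 / (w / (n:ℝ))) / Real.log n ≤ 1 + Real.log 2 + Real.log (1 / w) := by
  have hn3 : (3:ℝ) ≤ (n:ℝ) := by exact_mod_cast hn
  have hnpos : (0:ℝ) < n := by linarith
  have hlogn : 1 ≤ Real.log n := by
    rw [Real.le_log_iff_exp_le hnpos]
    have := Real.exp_one_lt_d9
    linarith
  have hlognpos : 0 < Real.log n := by linarith
  have harg : 1 / (w / (n:ℝ)) = (n:ℝ) / w := one_div_div _ _
  have hdiv1 : 1 ≤ (n:ℝ) / w := (one_le_div h0).2 (by linarith)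
  have hL0 : 0 ≤ Real.log (1 + 1 / (w / (n:ℝ))) := by
    rw [harg]; exact Real.log_nonneg (by linarith)
  refine ⟨div_nonneg hL0 hlognpos.le, ?_⟩
  have hlw : 0 ≤ Real.log (1 / w) := Real.log_nonneg ((one_le_div h0).2 h1)
  have hl2 : 0 ≤ Real.log 2 := Real.log_nonneg one_le_two
  have key : Real.log (1 + 1 / (w / (n:ℝ))) ≤ Real.log 2 + Real.log n + Real.log (1 / w) := by
    rw [harg]
    have h2 : 1 + (n:ℝ) / w ≤ 2 * ((n:ℝ) / w) := by linarith
    have := Real.log_le_log (by linarith : (0:ℝ) < 1 + (n:ℝ)/w) h2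
    have hexp : Real.log (2 * ((n:ℝ) / w)) = Real.log 2 + Real.log n + Real.log (1 / w) := by
      rw [Real.log_mul two_ne_zero (by positivity), Real.log_div (by positivity) h0.ne',
        Real.log_div one_ne_zero h0.ne', Real.log_one]
      ring
    linarith [hexp ▸ this]
  rw [div_le_iff₀ hlognpos]
  nlinarith

/-- Pointwise limit of the normalized log factor. -/
lemma logfac_tendsto {x : ℝ} (hx : 0 < x) :
    Tendsto (fun n : ℕ => Real.log (1 + 1 / (x / (n:ℝ))) / Real.log n) atTop (nhds 1) := by
  have hlog : Tendsto (fun n : ℕ => Real.log n) atTop atTop :=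
    Real.tendsto_log_atTop.comp tendsto_natCast_atTop_atTop
  have hinv : Tendsto (fun n : ℕ => (Real.log n)⁻¹) atTop (nhds 0) :=
    hlog.inv_tendsto_atTop
  have hxn : Tendsto (fun n : ℕ => x / (n:ℝ)) atTop (nhds 0) :=
    tendsto_const_div_atTop_nhds_zero_nat x
  have hone : Tendsto (fun n : ℕ => 1 + x / (n:ℝ)) atTop (nhds 1) := by
    simpa using tendsto_const_nhds.add hxn
  have hlog1 : Tendsto (fun n : ℕ => Real.log (1 + x / (n:ℝ))) atTop (nhds 0) := by
    have := ((Real.continuousAt_log one_ne_zero).tendsto).comp hone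
    simpa [Function.comp_def] using this
  have hmain : Tendsto (fun n : ℕ =>
      1 + (Real.log (1 + x / (n:ℝ)) - Real.log x) * (Real.log n)⁻¹) atTop (nhds 1) := by
    have : Tendsto (fun n : ℕ =>
        (Real.log (1 + x / (n:ℝ)) - Real.log x) * (Real.log n)⁻¹) atTop (nhds 0) := by
      simpa using (hlog1.sub tendsto_const_nhds).mul hinv
    simpa using tendsto_const_nhds.add this
  refine hmain.congr' ?_
  filter_upwards [eventually_ge_atTop 2] with n hn
  have hnpos : (0:ℝ) < n := by
    have : (2:ℝ) ≤ n := by exact_mod_cast hn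
    linarith
  have hlogn : 0 < Real.log n := Real.log_pos (by exact_mod_cast (by omega : 1 < n))
  have harg : 1 + 1 / (x / (n:ℝ)) = (n:ℝ) * (1 + x / n) / x := by
    rw [one_div_div]; field_simp; ring
  rw [harg, Real.log_div (by positivity) hx.ne', Real.log_mul hnpos.ne' (by positivity)]
  field_simp
  ring

/-- Integrability of the dominating functions. -/
lemma integrable_dom (p : ℝ) (hp : -1 < p) (k : ℕ) :
    IntegrableOn (fun v : ℝ => v ^ p * (1 + Real.log 2 + Real.log (1 / v)) ^ k)
      (Set.Ioc (0:ℝ) 1) volume := by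
  have hp1 : (0:ℝ) < p + 1 := by linarith
  set δ : ℝ := (p + 1) / (2 * ((k:ℝ) + 1)) with hδ
  have hδpos : 0 < δ := by positivity
  have hq : -1 < p - δ * k := by
    have hkδ : (k:ℝ) * δ < p + 1 := by
      rw [hδ, mul_div_assoc']
      rw [div_lt_iff₀ (by positivity)]
      nlinarith [Nat.cast_nonneg (α := ℝ) k]
    nlinarith
  set C : ℝ := 1 + Real.log 2 + 1 / δ with hC
  have hl2 : 0 ≤ Real.log 2 := Real.log_nonneg one_le_two
  have hCpos : 0 < C := by rw [hC]; positivity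
  have hg : IntegrableOn (fun v : ℝ => C ^ k * v ^ (p - δ * k)) (Set.Ioc (0:ℝ) 1) volume := by
    have h := intervalIntegral.intervalIntegrable_rpow' (a := 0) (b := 1) hq
    rw [intervalIntegrable_iff, uIoc_of_le (zero_le_one)] at h
    exact h.const_mul _
  have hmeas : Measurable (fun v : ℝ => v ^ p * (1 + Real.log 2 + Real.log (1 / v)) ^ k) := by
    apply Measurable.mul
    · fun_prop
    · exact (measurable_const.add (Real.measurable_log.comp (measurable_const.div measurable_id))).pow_const k
  refine MeasureTheory.Integrable.mono hg hmeas.aestronglyMeasurable ?_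
  rw [ae_restrict_iff' measurableSet_Ioc]
  refine ae_of_all _ fun v hv => ?_
  obtain ⟨hv0, hv1⟩ := hv
  have hvp : 0 ≤ v ^ p := Real.rpow_nonneg hv0.le p
  have hlv : 0 ≤ Real.log (1 / v) := Real.log_nonneg ((one_le_div hv0).2 hv1)
  have hφ0 : 0 ≤ 1 + Real.log 2 + Real.log (1 / v) := by linarith
  have hmδ : (1:ℝ) ≤ v ^ (-δ) := Real.one_le_rpow_of_pos_of_le_one_of_nonpos hv0 hv1 (by linarith)
  have hφle : 1 + Real.log 2 + Real.log (1 / v) ≤ C * v ^ (-δ) := by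
    have hlog_le : Real.log (1 / v) ≤ v ^ (-δ) / δ := by
      have h1 : Real.log ((1 / v) ^ δ) = δ * Real.log (1 / v) :=
        Real.log_rpow (by positivity) δ
      have h2 : Real.log ((1 / v) ^ δ) ≤ (1 / v) ^ δ := by
        have := Real.log_le_sub_one_of_pos (x := (1/v) ^ δ) (by positivity)
        linarith
      have h3 : ((1:ℝ) / v) ^ δ = v ^ (-δ) := by
        rw [one_div, ← Real.rpow_neg_one v, ← Real.rpow_mul hv0.le]
        ring_nf
      rw [h1] at h2
      rw [← h3, le_div_iff₀ hδpos]
      nlinarith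
    calc 1 + Real.log 2 + Real.log (1 / v)
        ≤ (1 + Real.log 2) * v ^ (-δ) + v ^ (-δ) / δ := by
          nlinarith
      _ = C * v ^ (-δ) := by rw [hC]; field_simp
  have hφk : (1 + Real.log 2 + Real.log (1 / v)) ^ k ≤ (C * v ^ (-δ)) ^ k :=
    pow_le_pow_left₀ hφ0 hφle k
  have hvk : (v ^ (-δ)) ^ k = v ^ (-δ * k) := by
    rw [← Real.rpow_natCast (v ^ (-δ)) k, ← Real.rpow_mul hv0.le]
  have hbound : v ^ p * (1 + Real.log 2 + Real.log (1 / v)) ^ k ≤ C ^ k * v ^ (p - δ * k) := by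
    calc v ^ p * (1 + Real.log 2 + Real.log (1 / v)) ^ k
        ≤ v ^ p * (C * v ^ (-δ)) ^ k := mul_le_mul_of_nonneg_left hφk hvp
      _ = C ^ k * (v ^ p * v ^ (-δ * k)) := by rw [mul_pow, hvk]; ring
      _ = C ^ k * v ^ (p - δ * k) := by rw [← Real.rpow_add hv0]; ring_nf
  rw [Real.norm_eq_abs, Real.norm_eq_abs, abs_of_nonneg (by positivity),
    abs_of_nonneg (by positivity)]
  exact hbound

end AuxLemmas

section
open Set

/-- For the log-modulated Riemann–Liouville kernel
`K(t) = t^{H−1/2} log(1+1/t)/Γ(H+1/2)` with `H ∈ (0,1/2]` and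
`λ(n) = (∫_0^{1/n} K(r)² dr)⁻¹`: for all `0 ≤ s < t ≤ 1`,
`λ(n) ∫_0^{s/n} K((t−s)/n + r) K(r) dr → 2H ∫_0^s (t−s+r)^{H−1/2} r^{H−1/2} dr`,
i.e. the limiting kernel is `K̄(t) = √(2H)·t^{H−1/2}`. -/
theorem log_modulated_kernel_limit_covariance (H : ℝ) (hH0 : 0 < H) (hH : H ≤ 1 / 2)
    (K : ℝ → ℝ)
    (hK : ∀ t : ℝ, K t = t ^ (H - 1 / 2) * Real.log (1 + 1 / t) / Real.Gamma (H + 1 / 2))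
    (s t : ℝ) (hs : 0 ≤ s) (hst : s < t) (ht : t ≤ 1) :
    Tendsto (fun n : ℕ =>
        (∫ r in Set.Ioc 0 (1 / (n : ℝ)), K r ^ 2)⁻¹ *
          ∫ r in Set.Ioc 0 (s / (n : ℝ)), K ((t - s) / (n : ℝ) + r) * K r)
      atTop
      (nhds (2 * H * ∫ r in Set.Ioc 0 s, (t - s + r) ^ (H - 1 / 2) * r ^ (H - 1 / 2))) := by
  rcases eq_or_lt_of_le hs with h0 | hspos
  · simp only [← h0, zero_div, Set.Ioc_self, Measure.restrict_empty,
      MeasureTheory.integral_zero_measure, mul_zero]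
    exact tendsto_const_nhds
  have hts : 0 < t - s := by linarith
  have hts1 : t - s ≤ 1 := by linarith
  have hs1 : s ≤ 1 := by linarith
  set c : ℝ := H - 1 / 2 with hc
  have hc1 : (-1:ℝ) < 2 * c := by rw [hc]; linarith
  have hcle : c ≤ 0 := by rw [hc]; linarith
  have hcm1 : (-1:ℝ) < c := by rw [hc]; linarith
  set G : ℝ := Real.Gamma (H + 1 / 2) with hGdef
  have hGpos : 0 < G := Real.Gamma_pos_of_pos (by linarith)
  -- the two normalized integral sequences
  set Af : ℕ → ℝ := fun n => ∫ v in Set.Ioc (0:ℝ) 1,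
      v ^ (2*c) * (Real.log (1 + 1/(v/(n:ℝ))) / Real.log n) ^ 2 with hAf
  set Bf : ℕ → ℝ := fun n => ∫ v in Set.Ioc (0:ℝ) s,
      ((t - s + v) ^ c * v ^ c) * (Real.log (1 + 1/((t - s + v)/(n:ℝ))) / Real.log n)
        * (Real.log (1 + 1/(v/(n:ℝ))) / Real.log n) with hBf
  -- value of the limiting denominator integral
  have h2c : 2 * c + 1 = 2 * H := by rw [hc]; ring
  have hIone : (∫ v in Set.Ioc (0:ℝ) 1, v ^ (2*c)) = (2*H)⁻¹ := by
    rw [← intervalIntegral.integral_of_le zero_le_one, integral_rpow (Or.inl hc1),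
      Real.one_rpow, Real.zero_rpow (by rw [h2c]; exact (by linarith : (0:ℝ) < 2*H).ne'),
      h2c, sub_zero, one_div]
  -- limit of the denominator sequence
  have hAlim : Tendsto Af atTop (nhds ((2*H)⁻¹)) := by
    rw [hAf, ← hIone]
    refine tendsto_integral_filter_of_dominated_convergence
      (fun v => v ^ (2*c) * (1 + Real.log 2 + Real.log (1/v)) ^ 2) ?_ ?_ ?_ ?_
    · filter_upwards with n
      apply Measurable.aestronglyMeasurable
      refine Measurable.mul (by fun_prop) ?_
      exact ((Real.measurable_log.comp (measurable_const.add
        (measurable_const.div (measurable_id.div_const _)))).div_const _).pow_const 2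
    · filter_upwards [eventually_ge_atTop 3] with n hn
      rw [ae_restrict_iff' measurableSet_Ioc]
      refine ae_of_all _ fun v hv => ?_
      obtain ⟨hv0, hv1⟩ := hv
      obtain ⟨hq0, hqle⟩ := logfac_bounds n hn hv0 hv1
      rw [Real.norm_eq_abs, abs_of_nonneg (by positivity)]
      have h2 : (Real.log (1 + 1/(v/(n:ℝ))) / Real.log n) ^ 2
          ≤ (1 + Real.log 2 + Real.log (1/v)) ^ 2 := by
        apply pow_le_pow_left₀ hq0 hqle
      exact mul_le_mul_of_nonneg_left h2 (Real.rpow_nonneg hv0.le _)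
    · exact integrable_dom (2*c) hc1 2
    · rw [ae_restrict_iff' measurableSet_Ioc]
      refine ae_of_all _ fun v hv => ?_
      have h1 := logfac_tendsto hv.1
      have h2 : Tendsto (fun n : ℕ =>
          v^(2*c) * (Real.log (1 + 1/(v/(n:ℝ))) / Real.log n)^2)
          atTop (nhds (v^(2*c) * 1^2)) := tendsto_const_nhds.mul (h1.pow 2)
      rw [one_pow, mul_one] at h2
      exact h2
  -- limit of the numerator sequence
  have hBlim : Tendsto Bf atTop
      (nhds (∫ v in Set.Ioc (0:ℝ) s, (t - s + v) ^ c * v ^ c)) := by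
    have hCw0 : 0 ≤ 1 + Real.log 2 + Real.log (1/(t-s)) := by
      have h1 : 0 ≤ Real.log (1/(t-s)) := Real.log_nonneg ((one_le_div hts).2 hts1)
      have h2 : 0 ≤ Real.log 2 := Real.log_nonneg one_le_two
      linarith
    rw [hBf]
    refine tendsto_integral_filter_of_dominated_convergence
      (fun v => ((t-s) ^ c * (1 + Real.log 2 + Real.log (1/(t-s)))) *
        (v ^ c * (1 + Real.log 2 + Real.log (1/v)) ^ 1)) ?_ ?_ ?_ ?_
    · filter_upwards with n
      apply Measurable.aestronglyMeasurable
      refine ((Measurable.mul (by fun_prop) (by fun_prop)).mul ?_).mul ?_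
      · exact (Real.measurable_log.comp (measurable_const.add
          (measurable_const.div ((measurable_const.add measurable_id).div_const _)))).div_const _
      · exact (Real.measurable_log.comp (measurable_const.add
          (measurable_const.div (measurable_id.div_const _)))).div_const _
    · filter_upwards [eventually_ge_atTop 3] with n hn
      rw [ae_restrict_iff' measurableSet_Ioc]
      refine ae_of_all _ fun v hv => ?_
      obtain ⟨hv0, hvs⟩ := hv
      have hw0 : 0 < t - s + v := by linarith
      have hw1 : t - s + v ≤ 1 := by linarith
      obtain ⟨hqw0, hqwle⟩ := logfac_bounds n hn hw0 hw1
      obtain ⟨hqv0, hqvle⟩ := logfac_bounds n hn hv0 (hvs.trans hs1)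
      have hrp : (0:ℝ) ≤ (t - s + v) ^ c * v ^ c :=
        mul_nonneg (Real.rpow_nonneg hw0.le c) (Real.rpow_nonneg hv0.le c)
      rw [Real.norm_eq_abs, abs_of_nonneg
        (mul_nonneg (mul_nonneg hrp hqw0) hqv0), pow_one]
      have h1 : (t - s + v) ^ c ≤ (t - s) ^ c :=
        Real.rpow_le_rpow_of_nonpos hts (by linarith) hcle
      have h2 : Real.log (1/(t - s + v)) ≤ Real.log (1/(t-s)) :=
        Real.log_le_log (by positivity) (by
          apply one_div_le_one_div_of_le hts (by linarith))
      have hqw : Real.log (1 + 1/((t - s + v)/(n:ℝ))) / Real.log n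
          ≤ 1 + Real.log 2 + Real.log (1/(t-s)) := hqwle.trans (by linarith)
      calc ((t - s + v) ^ c * v ^ c) *
            (Real.log (1 + 1/((t - s + v)/(n:ℝ))) / Real.log n) *
            (Real.log (1 + 1/(v/(n:ℝ))) / Real.log n)
          ≤ (((t - s) ^ c * v ^ c) * (1 + Real.log 2 + Real.log (1/(t-s)))) *
            (1 + Real.log 2 + Real.log (1/v)) := by
            refine mul_le_mul ?_ hqvle hqv0 (mul_nonneg (mul_nonneg
              (Real.rpow_nonneg hts.le c) (Real.rpow_nonneg hv0.le c)) hCw0)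
            exact mul_le_mul (mul_le_mul_of_nonneg_right h1 (Real.rpow_nonneg hv0.le c))
              hqw hqw0 (mul_nonneg (Real.rpow_nonneg hts.le c) (Real.rpow_nonneg hv0.le c))
        _ = ((t-s) ^ c * (1 + Real.log 2 + Real.log (1/(t-s)))) *
            (v ^ c * (1 + Real.log 2 + Real.log (1/v))) := by ring
    · exact ((integrable_dom c hcm1 1).mono_set
        (Set.Ioc_subset_Ioc_right hs1)).const_mul _
    · rw [ae_restrict_iff' measurableSet_Ioc]
      refine ae_of_all _ fun v hv => ?_
      obtain ⟨hv0, hvs⟩ := hv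
      have hw0 : 0 < t - s + v := by linarith
      have h3 : Tendsto (fun n : ℕ =>
          ((t - s + v) ^ c * v ^ c) *
            (Real.log (1 + 1/((t - s + v)/(n:ℝ))) / Real.log n) *
            (Real.log (1 + 1/(v/(n:ℝ))) / Real.log n))
          atTop (nhds ((((t - s + v) ^ c * v ^ c) * 1) * 1)) :=
        (tendsto_const_nhds.mul (logfac_tendsto hw0)).mul (logfac_tendsto hv0)
      rw [mul_one, mul_one] at h3
      exact h3
  -- eventual identity
  have heq : ∀ᶠ n : ℕ in atTop,
      (∫ r in Set.Ioc 0 (1 / (n : ℝ)), K r ^ 2)⁻¹ *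
        (∫ r in Set.Ioc 0 (s / (n : ℝ)), K ((t - s) / (n : ℝ) + r) * K r)
      = Bf n / Af n := by
    filter_upwards [eventually_ge_atTop 2] with n hn
    have hn2 : (2:ℝ) ≤ (n:ℝ) := by exact_mod_cast hn
    have hnpos : (0:ℝ) < (n:ℝ) := by linarith
    have hnne : (n:ℝ) ≠ 0 := hnpos.ne'
    have hlogn : 0 < Real.log n := Real.log_pos (by linarith)
    have hncpos : (0:ℝ) < (n:ℝ) ^ (2*c) := Real.rpow_pos_of_pos hnpos _
    set Cn : ℝ := Real.log n ^ 2 / ((n:ℝ) * (n:ℝ) ^ (2*c) * G ^ 2) with hCn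
    have hCnpos : 0 < Cn := div_pos (pow_pos hlogn 2) (by positivity)
    have hnc : (n:ℝ) ^ (2*c) = (n:ℝ) ^ c * (n:ℝ) ^ c := by
      rw [two_mul, Real.rpow_add hnpos]
    -- denominator identity
    have hD : (∫ r in Set.Ioc 0 (1 / (n : ℝ)), K r ^ 2) = Cn * Af n := by
      have hsub : (∫ r in Set.Ioc 0 (1 / (n : ℝ)), K r ^ 2)
          = (n:ℝ)⁻¹ * ∫ v in Set.Ioc (0:ℝ) 1, K (v/(n:ℝ)) ^ 2 := by
        rw [← intervalIntegral.integral_of_le (by positivity : (0:ℝ) ≤ 1/(n:ℝ)),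
          ← intervalIntegral.integral_of_le zero_le_one,
          intervalIntegral.integral_comp_div (fun r => K r ^ 2) hnne,
          smul_eq_mul, zero_div, inv_mul_cancel_left₀ hnne]
      rw [hsub, hAf]
      rw [show Cn * (∫ v in Set.Ioc (0:ℝ) 1,
          v ^ (2*c) * (Real.log (1 + 1/(v/(n:ℝ))) / Real.log n) ^ 2)
        = (n:ℝ)⁻¹ * ∫ v in Set.Ioc (0:ℝ) 1, ((n:ℝ) * Cn) *
          (v ^ (2*c) * (Real.log (1 + 1/(v/(n:ℝ))) / Real.log n) ^ 2) from by
        rw [MeasureTheory.integral_const_mul]; field_simp]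
      congr 1
      refine setIntegral_congr_fun measurableSet_Ioc fun v hv => ?_
      obtain ⟨hv0, hv1⟩ := hv
      have hsq : ((v/(n:ℝ)) ^ c) ^ 2 = (v/(n:ℝ)) ^ (2*c) := by
        rw [← Real.rpow_natCast ((v/(n:ℝ)) ^ c) 2,
          ← Real.rpow_mul (by positivity : (0:ℝ) ≤ v/(n:ℝ))]
        norm_num [mul_comm]
      rw [hK, div_pow, mul_pow, hsq, Real.div_rpow hv0.le hnpos.le, hCn]
      field_simp
    -- numerator identity
    have hN : (∫ r in Set.Ioc 0 (s / (n : ℝ)), K ((t - s) / (n : ℝ) + r) * K r)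
        = Cn * Bf n := by
      have hsub : (∫ r in Set.Ioc 0 (s / (n : ℝ)), K ((t - s) / (n : ℝ) + r) * K r)
          = (n:ℝ)⁻¹ * ∫ v in Set.Ioc (0:ℝ) s,
              K ((t - s) / (n : ℝ) + v/(n:ℝ)) * K (v/(n:ℝ)) := by
        rw [← intervalIntegral.integral_of_le (by positivity : (0:ℝ) ≤ s/(n:ℝ)),
          ← intervalIntegral.integral_of_le hspos.le,
          intervalIntegral.integral_comp_div
            (fun r => K ((t - s) / (n : ℝ) + r) * K r) hnne,
          smul_eq_mul, zero_div, inv_mul_cancel_left₀ hnne]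
      rw [hsub, hBf]
      rw [show Cn * (∫ v in Set.Ioc (0:ℝ) s,
          ((t - s + v) ^ c * v ^ c) * (Real.log (1 + 1/((t - s + v)/(n:ℝ))) / Real.log n)
            * (Real.log (1 + 1/(v/(n:ℝ))) / Real.log n))
        = (n:ℝ)⁻¹ * ∫ v in Set.Ioc (0:ℝ) s, ((n:ℝ) * Cn) *
          (((t - s + v) ^ c * v ^ c) * (Real.log (1 + 1/((t - s + v)/(n:ℝ))) / Real.log n)
            * (Real.log (1 + 1/(v/(n:ℝ))) / Real.log n)) from by
        rw [MeasureTheory.integral_const_mul]; field_simp]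
      congr 1
      refine setIntegral_congr_fun measurableSet_Ioc fun v hv => ?_
      obtain ⟨hv0, hvs⟩ := hv
      have hw0 : 0 < t - s + v := by linarith
      have hadd : (t - s) / (n:ℝ) + v/(n:ℝ) = (t - s + v)/(n:ℝ) := by ring
      rw [hadd, hK, hK, Real.div_rpow hw0.le hnpos.le, Real.div_rpow hv0.le hnpos.le,
        hCn, hnc]
      have hncne : (n:ℝ) ^ c ≠ 0 := (Real.rpow_pos_of_pos hnpos c).ne'
      field_simp
    rw [hD, hN, mul_inv]
    calc (Cn⁻¹ * (Af n)⁻¹) * (Cn * Bf n)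
        = (Cn⁻¹ * Cn) * ((Af n)⁻¹ * Bf n) := by ring
      _ = (Af n)⁻¹ * Bf n := by rw [inv_mul_cancel₀ hCnpos.ne', one_mul]
      _ = Bf n / Af n := (div_eq_inv_mul _ _).symm
  -- conclusion
  have hfin := hBlim.div hAlim (by positivity : ((2*H:ℝ))⁻¹ ≠ 0)
  have hval : (∫ v in Set.Ioc (0:ℝ) s, (t - s + v) ^ c * v ^ c) / (2*H)⁻¹
      = 2 * H * ∫ r in Set.Ioc (0:ℝ) s, (t - s + r) ^ c * r ^ c := by
    rw [div_eq_mul_inv, inv_inv]; ring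
  rw [hval] at hfin
  refine Tendsto.congr' ?_ hfin
  exact heq.mono fun n h => h.symm

end
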